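/- Let D be a real symmetric positive semidefinite d×d matrix (d ≥ 2) with eigenvalues δ₁↓ ≥ δ₂↓ ≥ … in decreasing order. Then for any two orthonormal vectors v₁, v₂ in ℝ^d, ⟨v₁, D v₁⟩ · ⟨v₂, D v₂⟩ ≤ ((δ₁↓ + δ₂↓)/2)². -/

import Mathlib

open Matrix
open scoped ComplexOrder

open Classical in
/-- The eigenvalues of a matrix in increasing order (junk value `0` if not Hermitian). -/
noncomputable def eigUp {d : ℕ} (M : Matrix (Fin d) (Fin d) ℝ) : Fin d → ℝ :=
  if h : M.IsHermitian then h.eigenvalues ∘ Tuple.sort h.eigenvalues else 0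

/-- The eigenvalues of a matrix in decreasing order. -/
noncomputable def eigDown {d : ℕ} (M : Matrix (Fin d) (Fin d) ℝ) (j : Fin d) : ℝ :=
  eigUp M j.rev

/-- The standard symplectic form on `2n` canonical variables: block diagonal with
blocks `[[0,1],[-1,0]]`. -/
def Omega (n : ℕ) : Matrix (Fin (2*n)) (Fin (2*n)) ℝ :=
  Matrix.of fun i j =>
    if (i : ℕ) + 1 = (j : ℕ) ∧ (i : ℕ) % 2 = 0 then 1
    else if (j : ℕ) + 1 = (i : ℕ) ∧ (j : ℕ) % 2 = 0 then -1 else 0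

/-- Partial transposition matrix `T = 𝟙₂^{⊕ l} ⊕ σz^{⊕ (n-l)}` for the bipartition of the
first `l` versus the last `n - l` modes. -/
def Tmat (n l : ℕ) : Matrix (Fin (2*n)) (Fin (2*n)) ℝ :=
  Matrix.diagonal fun i => if (i : ℕ) / 2 < l ∨ (i : ℕ) % 2 = 0 then 1 else -1

/-- The partially transposed symplectic form `Ω̃ = T Ω T`. -/
def OmegaPT (n l : ℕ) : Matrix (Fin (2*n)) (Fin (2*n)) ℝ :=
  Tmat n l * Omega n * Tmat n l

open Classical in
/-- The positive square root of a positive semidefinite matrix (junk value `0` otherwise). -/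
noncomputable def msqrt {d : ℕ} (M : Matrix (Fin d) (Fin d) ℝ) : Matrix (Fin d) (Fin d) ℝ :=
  if h : M.PosSemidef then
    h.1.eigenvectorUnitary.1 * diagonal ((↑) ∘ (h.1.eigenvalues · |>.sqrt)) *
      (star h.1.eigenvectorUnitary : Matrix (Fin d) (Fin d) ℝ)
  else 0

/-- `σ + iΩ ≥ 0`: the Robertson–Schrödinger condition for a real symmetric matrix `σ`
to be a bona fide covariance matrix. -/
def IsCM (n : ℕ) (σ : Matrix (Fin (2*n)) (Fin (2*n)) ℝ) : Prop :=
  σ.IsSymm ∧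
    (σ.map (Complex.ofReal ·) + Complex.I • (Omega n).map (Complex.ofReal ·)).PosSemidef

/-- `ν̃₋²`, the square of the smallest partially transposed symplectic eigenvalue of `σ`, for
the bipartition of the first `l` versus the remaining modes: the smallest eigenvalue of
`σ^{1/2} Ω̃ᵀ σ Ω̃ σ^{1/2}`. -/
noncomputable def nuSq (n l : ℕ) (σ : Matrix (Fin (2*n)) (Fin (2*n)) ℝ) : ℝ :=
  sInf (spectrum ℝ (msqrt σ * (OmegaPT n l)ᵀ * σ * OmegaPT n l * msqrt σ))

/-- `ν̃₋`, the smallest partially transposed symplectic eigenvalue of `σ`. -/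
noncomputable def nuMin (n l : ℕ) (σ : Matrix (Fin (2*n)) (Fin (2*n)) ℝ) : ℝ :=
  Real.sqrt (nuSq n l σ)

/-- The logarithmic negativity `E_N(σ) = max (0, −log₂ ν̃₋)`. -/
noncomputable def logNeg (n l : ℕ) (σ : Matrix (Fin (2*n)) (Fin (2*n)) ℝ) : ℝ :=
  max 0 (-(Real.logb 2 (nuMin n l σ)))


lemma rayleigh_expand (d : ℕ) (D : Matrix (Fin d) (Fin d) ℝ) (hH : D.IsHermitian)
    (v : Fin d → ℝ) :
    v ⬝ᵥ D *ᵥ v = ∑ j, hH.eigenvalues j * ((hH.eigenvectorBasis j : Fin d → ℝ) ⬝ᵥ v)^2 := by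
  have hip : ∀ x y : EuclideanSpace ℝ (Fin d), @inner ℝ _ _ x y = (x : Fin d → ℝ) ⬝ᵥ y := by
    intro x y
    simp [PiLp.inner_apply, dotProduct, RCLike.inner_apply, mul_comm]
  have := hH.eigenvectorBasis.sum_inner_mul_inner (WithLp.toLp 2 v)
      (WithLp.toLp 2 (D *ᵥ v : Fin d → ℝ))
  simp only [hip, WithLp.ofLp_toLp] at this
  rw [← this]
  congr 1
  ext j
  have h2 : (hH.eigenvectorBasis j : Fin d → ℝ) ⬝ᵥ (D *ᵥ v)
      = hH.eigenvalues j * ((hH.eigenvectorBasis j : Fin d → ℝ) ⬝ᵥ v) := by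
    have hDt : Dᵀ = D := by
      rw [← Matrix.conjTranspose_eq_transpose_of_trivial]; exact hH.eq
    rw [dotProduct_mulVec, ← mulVec_transpose, hDt]
    erw [hH.mulVec_eigenvectorBasis]
    rw [smul_dotProduct]
    rfl
  rw [h2]
  ring_nf
  rw [dotProduct_comm]
  ring

lemma parseval_aux (d : ℕ) (D : Matrix (Fin d) (Fin d) ℝ) (hH : D.IsHermitian)
    (v : Fin d → ℝ) (hv : v ⬝ᵥ v = 1) :
    ∑ j, ((hH.eigenvectorBasis j : Fin d → ℝ) ⬝ᵥ v)^2 = 1 := by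
  have hip : ∀ x y : EuclideanSpace ℝ (Fin d), @inner ℝ _ _ x y = (x : Fin d → ℝ) ⬝ᵥ y := by
    intro x y
    simp [PiLp.inner_apply, dotProduct, RCLike.inner_apply, mul_comm]
  have := hH.eigenvectorBasis.sum_inner_mul_inner (WithLp.toLp 2 v)
      (WithLp.toLp 2 v)
  simp only [hip, WithLp.ofLp_toLp] at this
  rw [← hv, ← this]
  congr 1; ext j
  rw [dotProduct_comm v]; ring

lemma bessel_aux (d : ℕ) (D : Matrix (Fin d) (Fin d) ℝ) (hH : D.IsHermitian)
    (v₁ v₂ : Fin d → ℝ) (h1 : v₁ ⬝ᵥ v₁ = 1) (h2 : v₂ ⬝ᵥ v₂ = 1) (h12 : v₁ ⬝ᵥ v₂ = 0)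
    (j : Fin d) :
    ((hH.eigenvectorBasis j : Fin d → ℝ) ⬝ᵥ v₁)^2
      + ((hH.eigenvectorBasis j : Fin d → ℝ) ⬝ᵥ v₂)^2 ≤ 1 := by
  have hip : ∀ x y : EuclideanSpace ℝ (Fin d), @inner ℝ _ _ x y = (x : Fin d → ℝ) ⬝ᵥ y := by
    intro x y
    simp [PiLp.inner_apply, dotProduct, RCLike.inner_apply, mul_comm]
  set w : Fin 2 → EuclideanSpace ℝ (Fin d) := ![WithLp.toLp 2 v₁, WithLp.toLp 2 v₂] with hw
  have hortho : Orthonormal ℝ w := by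
    rw [orthonormal_iff_ite]
    intro i k
    fin_cases i <;> fin_cases k <;>
      simp [hw, hip, h1, h2, h12, dotProduct_comm v₂ v₁, -inner_self_eq_norm_sq_to_K]
  have hb := hortho.sum_inner_products_le (x := hH.eigenvectorBasis j) (s := Finset.univ)
  have hnorm : ‖hH.eigenvectorBasis j‖ = 1 := hH.eigenvectorBasis.orthonormal.1 j
  rw [hnorm] at hb
  simp only [Fin.sum_univ_two, hip] at hb
  have e1 : (w 0 : Fin d → ℝ) = v₁ := rfl
  have e2 : (w 1 : Fin d → ℝ) = v₂ := rfl
  rw [e1, e2] at hb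
  calc ((hH.eigenvectorBasis j : Fin d → ℝ) ⬝ᵥ v₁)^2
        + ((hH.eigenvectorBasis j : Fin d → ℝ) ⬝ᵥ v₂)^2
      = ‖v₁ ⬝ᵥ (hH.eigenvectorBasis j : Fin d → ℝ)‖^2
        + ‖v₂ ⬝ᵥ (hH.eigenvectorBasis j : Fin d → ℝ)‖^2 := by
        rw [Real.norm_eq_abs, Real.norm_eq_abs, sq_abs, sq_abs,
          dotProduct_comm v₁, dotProduct_comm v₂]
    _ ≤ 1^2 := hb
    _ = 1 := one_pow 2

lemma sorted_sum_bound (d : ℕ) (hd : 2 ≤ d) (f w : Fin d → ℝ) (hmono : Monotone f)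
    (hw0 : ∀ j, 0 ≤ w j) (hw1 : ∀ j, w j ≤ 1) (hwsum : ∑ j, w j = 2) :
    ∑ j, f j * w j ≤ f ⟨d - 1, by omega⟩ + f ⟨d - 2, by omega⟩ := by
  set i1 : Fin d := ⟨d - 1, by omega⟩ with hi1
  set i2 : Fin d := ⟨d - 2, by omega⟩ with hi2
  have hi21 : i2 ≤ i1 := by simp only [Fin.le_def, hi1, hi2]; omega
  have key : ∑ j, (f j - f i2) * w j ≤ f i1 - f i2 := by
    calc ∑ j, (f j - f i2) * w j
        ≤ ∑ j, (if j = i1 then f i1 - f i2 else 0) := by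
          apply Finset.sum_le_sum
          intro j _
          by_cases hj : j = i1
          · rw [if_pos hj, hj]
            nlinarith [hw1 i1, hw0 i1, hmono hi21]
          · simp only [if_neg hj]
            have hjle : j ≤ i2 := by
              have hlt := j.isLt
              have hne : (j : ℕ) ≠ d - 1 := fun h => hj (Fin.ext (by simpa [hi1] using h))
              simp only [Fin.le_def, hi2]; omega
            have hle : f j ≤ f i2 := hmono hjle
            nlinarith [hw0 j]
      _ = f i1 - f i2 := by simp
  have expand : ∑ j, f j * w j = (∑ j, (f j - f i2) * w j) + f i2 * (∑ j, w j) := by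
    rw [Finset.mul_sum, ← Finset.sum_add_distrib]
    congr 1; ext j; ring
  rw [expand, hwsum]; linarith

lemma prod_le_half_sq (a b s : ℝ) (ha : 0 ≤ a) (hb : 0 ≤ b) (hab : a + b ≤ s) :
    a * b ≤ (s / 2) ^ 2 := by nlinarith [sq_nonneg (a - b)]


set_option maxHeartbeats 1000000 in
/-- For a real symmetric positive semidefinite matrix `D` and orthonormal vectors `v₁, v₂`,
the product of Rayleigh quotients `⟨v₁, Dv₁⟩⟨v₂, Dv₂⟩` is at most `((δ₁↓ + δ₂↓)/2)²`,
where `δ₁↓ ≥ δ₂↓` are the two largest eigenvalues of `D`. -/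
theorem rayleigh_product_upper_bound (d : ℕ) (hd : 2 ≤ d)
    (D : Matrix (Fin d) (Fin d) ℝ) (hD : D.PosSemidef)
    (v₁ v₂ : Fin d → ℝ) (h1 : v₁ ⬝ᵥ v₁ = 1) (h2 : v₂ ⬝ᵥ v₂ = 1) (h12 : v₁ ⬝ᵥ v₂ = 0) :
    (v₁ ⬝ᵥ D *ᵥ v₁) * (v₂ ⬝ᵥ D *ᵥ v₂) ≤
      ((eigDown D ⟨0, by omega⟩ + eigDown D ⟨1, by omega⟩) / 2) ^ 2 := by
  have hH : D.IsHermitian := hD.1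
  have hup : eigUp D = hH.eigenvalues ∘ Tuple.sort hH.eigenvalues := by
    rw [eigUp, dif_pos hH]
  have hmono : Monotone (eigUp D) := hup ▸ Tuple.monotone_sort hH.eigenvalues
  have hr1 : Fin.rev (⟨0, by omega⟩ : Fin d) = ⟨d - 1, by omega⟩ := by
    ext; simp [Fin.val_rev]
  have hr2 : Fin.rev (⟨1, by omega⟩ : Fin d) = ⟨d - 2, by omega⟩ := by
    ext; simp [Fin.val_rev]
  have hd1 : eigDown D ⟨0, by omega⟩ = eigUp D ⟨d - 1, by omega⟩ :=
    congrArg (eigUp D) hr1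
  have hd2 : eigDown D ⟨1, by omega⟩ = eigUp D ⟨d - 2, by omega⟩ :=
    congrArg (eigUp D) hr2
  set π := Tuple.sort hH.eigenvalues with hπ
  have hupj : ∀ j, eigUp D j = hH.eigenvalues (π j) := fun j => congrFun hup j
  have hw0 : ∀ j : Fin d, (0:ℝ) ≤ ((hH.eigenvectorBasis (π j) : Fin d → ℝ) ⬝ᵥ v₁)^2
      + ((hH.eigenvectorBasis (π j) : Fin d → ℝ) ⬝ᵥ v₂)^2 := fun j => by positivity
  have hw1 : ∀ j : Fin d, ((hH.eigenvectorBasis (π j) : Fin d → ℝ) ⬝ᵥ v₁)^2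
      + ((hH.eigenvectorBasis (π j) : Fin d → ℝ) ⬝ᵥ v₂)^2 ≤ 1 :=
    fun j => bessel_aux d D hH v₁ v₂ h1 h2 h12 (π j)
  have hwsum : ∑ j, (((hH.eigenvectorBasis (π j) : Fin d → ℝ) ⬝ᵥ v₁)^2
      + ((hH.eigenvectorBasis (π j) : Fin d → ℝ) ⬝ᵥ v₂)^2) = 2 := by
    have hstep : ∑ j, (((hH.eigenvectorBasis (π j) : Fin d → ℝ) ⬝ᵥ v₁)^2
        + ((hH.eigenvectorBasis (π j) : Fin d → ℝ) ⬝ᵥ v₂)^2)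
        = ∑ j, (((hH.eigenvectorBasis j : Fin d → ℝ) ⬝ᵥ v₁)^2
        + ((hH.eigenvectorBasis j : Fin d → ℝ) ⬝ᵥ v₂)^2) :=
      Equiv.sum_comp π (fun j => ((hH.eigenvectorBasis j : Fin d → ℝ) ⬝ᵥ v₁)^2
        + ((hH.eigenvectorBasis j : Fin d → ℝ) ⬝ᵥ v₂)^2)
    rw [hstep, Finset.sum_add_distrib, parseval_aux d D hH v₁ h1, parseval_aux d D hH v₂ h2]
    norm_num
  have hsum : ∑ j, eigUp D j * (((hH.eigenvectorBasis (π j) : Fin d → ℝ) ⬝ᵥ v₁)^2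
      + ((hH.eigenvectorBasis (π j) : Fin d → ℝ) ⬝ᵥ v₂)^2)
      ≤ eigUp D ⟨d - 1, by omega⟩ + eigUp D ⟨d - 2, by omega⟩ :=
    sorted_sum_bound d hd (eigUp D) _ hmono hw0 hw1 hwsum
  have step1 : ∑ j, eigUp D j * (((hH.eigenvectorBasis (π j) : Fin d → ℝ) ⬝ᵥ v₁)^2
      + ((hH.eigenvectorBasis (π j) : Fin d → ℝ) ⬝ᵥ v₂)^2)
      = ∑ j, hH.eigenvalues (π j) * (((hH.eigenvectorBasis (π j) : Fin d → ℝ) ⬝ᵥ v₁)^2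
      + ((hH.eigenvectorBasis (π j) : Fin d → ℝ) ⬝ᵥ v₂)^2) :=
    Finset.sum_congr rfl (fun j _ => by rw [hupj j])
  have step2 : ∑ j, hH.eigenvalues (π j) * (((hH.eigenvectorBasis (π j) : Fin d → ℝ) ⬝ᵥ v₁)^2
      + ((hH.eigenvectorBasis (π j) : Fin d → ℝ) ⬝ᵥ v₂)^2)
      = ∑ j, hH.eigenvalues j * (((hH.eigenvectorBasis j : Fin d → ℝ) ⬝ᵥ v₁)^2
      + ((hH.eigenvectorBasis j : Fin d → ℝ) ⬝ᵥ v₂)^2) :=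
    Equiv.sum_comp π (fun j => hH.eigenvalues j
      * (((hH.eigenvectorBasis j : Fin d → ℝ) ⬝ᵥ v₁)^2
      + ((hH.eigenvectorBasis j : Fin d → ℝ) ⬝ᵥ v₂)^2))
  have hsum2 := ((step1.trans step2).symm.trans_le hsum)
  have ha : 0 ≤ v₁ ⬝ᵥ D *ᵥ v₁ := by simpa using hD.dotProduct_mulVec_nonneg v₁
  have hb : 0 ≤ v₂ ⬝ᵥ D *ᵥ v₂ := by simpa using hD.dotProduct_mulVec_nonneg v₂
  have hexp : (v₁ ⬝ᵥ D *ᵥ v₁) + (v₂ ⬝ᵥ D *ᵥ v₂)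
      = ∑ j, hH.eigenvalues j * (((hH.eigenvectorBasis j : Fin d → ℝ) ⬝ᵥ v₁)^2
      + ((hH.eigenvectorBasis j : Fin d → ℝ) ⬝ᵥ v₂)^2) := by
    rw [rayleigh_expand d D hH v₁, rayleigh_expand d D hH v₂, ← Finset.sum_add_distrib]
    congr 1; ext j; ring
  have hab := hexp.trans_le hsum2
  exact le_of_le_of_eq (prod_le_half_sq _ _ _ ha hb hab)
    (congrArg (fun t => (t / 2) ^ 2) (congrArg₂ (· + ·) hd1 hd2)).symm
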